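/- Let ℓ > 0 and for k ≥ 0 let T_ℓ^k be the k-th finite approximation to the ternary Cantor set of length ℓ, with the metric induced from ℝ. Then the magnitude of T_ℓ^k is defined and equals 1 + 2^k·tanh(ℓ/(2·3^k)) + (1/2)·Σ_{i=1}^{k} 2^i·tanh(ℓ/(2·3^i)). -/

import Mathlib

noncomputable def MagGsum : List ℝ → ℝ
  | a :: b :: t => Real.tanh ((b - a) / 2) + MagGsum (b :: t)
  | _ => 0

lemma magTanhHalf (d : ℝ) :
    Real.tanh (d / 2) = 1 - 2 * (Real.exp (-d) / (1 + Real.exp (-d))) := by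
  rw [Real.tanh_eq_sinh_div_cosh, Real.sinh_eq, Real.cosh_eq]
  have h2 : Real.exp (-d) = Real.exp (-(d / 2)) * Real.exp (-(d / 2)) := by
    rw [← Real.exp_add]; ring_nf
  set a := Real.exp (-(d / 2)) with ha'
  set b := Real.exp (d / 2) with hb'
  have h1 : b * a = 1 := by rw [ha', hb', ← Real.exp_add]; norm_num
  have ha : (0:ℝ) < a := Real.exp_pos _
  have hb : (0:ℝ) < b := Real.exp_pos _
  rw [h2]
  have hc : (0:ℝ) < 1 + a * a := by positivity
  have hd : (0:ℝ) < b + a := by positivity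
  field_simp
  linear_combination (2*a) * h1

lemma magSumUpd (s : Finset ℝ) (e w : ℝ → ℝ) {y : ℝ} (c : ℝ) (hy : y ∈ s) :
    ∑ u ∈ s, e u * Function.update w y c u = (∑ u ∈ s, e u * w u) + e y * (c - w y) := by
  rw [← Finset.sum_erase_add _ _ hy, ← Finset.sum_erase_add _ (fun u => e u * w u) hy]
  have h1 : ∑ u ∈ s.erase y, e u * Function.update w y c u
      = ∑ u ∈ s.erase y, e u * w u :=
    Finset.sum_congr rfl (fun u hu => by
      rw [Function.update_of_ne (Finset.ne_of_mem_erase hu)])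
  rw [h1, Function.update_self]; ring

lemma magSumUpdNot (s : Finset ℝ) (e w : ℝ → ℝ) {y : ℝ} (c : ℝ) (hy : y ∉ s) :
    ∑ u ∈ s, e u * Function.update w y c u = ∑ u ∈ s, e u * w u :=
  Finset.sum_congr rfl (fun u hu => by
    rw [Function.update_of_ne (by rintro rfl; exact hy hu)])

lemma magLine : ∀ xs : List ℝ, xs.Chain' (· < ·) → xs ≠ [] →
    ∃ w : ℝ → ℝ,
      (∀ x ∈ xs, ∑ u ∈ xs.toFinset, Real.exp (-|x - u|) * w u = 1) ∧
      ∑ x ∈ xs.toFinset, w x = 1 + MagGsum xs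
  | [], _, h => absurd rfl h
  | [x], _, _ => ⟨fun _ => 1, by simp [MagGsum], by simp [MagGsum]⟩
  | x :: y :: t, hch, _ => by
    obtain ⟨w, H1, H2⟩ := magLine (y :: t) hch.tail (by simp)
    set ys := y :: t with hys
    have hpw : (x :: ys).Pairwise (· < ·) := List.isChain_iff_pairwise.mp hch
    have hxlt : ∀ u ∈ ys, x < u := (List.pairwise_cons.mp hpw).1
    have hyle : ∀ u ∈ ys, y ≤ u := by
      intro u hu
      rcases List.mem_cons.mp hu with rfl | hu
      · exact le_refl u
      · exact ((List.pairwise_cons.mp hpw.of_cons).1 u hu).le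
    have hxns : x ∉ ys.toFinset := by
      simp only [List.mem_toFinset]
      intro hx; exact absurd rfl (hxlt x hx).ne
    have hys' : y ∈ ys.toFinset := by simp [hys]
    set d := y - x with hdd
    have hd : 0 < d := sub_pos.mpr (hxlt y (by simp [hys]))
    have hE : (0:ℝ) < 1 + Real.exp (-d) := by positivity
    set f := Real.exp (-d) / (1 + Real.exp (-d)) with hf
    have hf2 : Real.exp (-d) * (1 - f) = f := by
      rw [hf]; field_simp; ring
    set w' := Function.update (Function.update w y (w y - f)) x (1 - f) with hw'
    have hwx : w' x = 1 - f := Function.update_self _ _ _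
    have hsum : ∀ e : ℝ → ℝ, ∑ u ∈ ys.toFinset, e u * w' u
        = (∑ u ∈ ys.toFinset, e u * w u) - e y * f := by
      intro e
      rw [hw', magSumUpdNot _ _ _ _ hxns, magSumUpd _ _ _ _ hys']
      ring
    refine ⟨w', ?_, ?_⟩
    · intro z hz
      rw [List.toFinset_cons, Finset.sum_insert hxns]
      rcases List.mem_cons.mp hz with rfl | hz
      · have hxe : ∀ u ∈ ys.toFinset, Real.exp (-|z - u|) * w u
            = Real.exp (-d) * (Real.exp (-|y - u|) * w u) := by
          intro u hu
          have h1 : y ≤ u := hyle u (List.mem_toFinset.mp hu)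
          have h2 : z < u := hxlt u (List.mem_toFinset.mp hu)
          have : |z - u| = |y - u| + d := by
            rw [abs_of_nonpos (by linarith), abs_of_nonpos (by linarith)]; ring
          rw [this, neg_add, Real.exp_add]; ring
        rw [hsum, Finset.sum_congr rfl hxe, ← Finset.mul_sum, H1 y (by simp [hys]),
          hwx, sub_self, abs_zero, neg_zero, Real.exp_zero]
        have h3 : |z - y| = d := by rw [abs_of_nonpos (by linarith), hdd]; ring
        rw [h3]
        linear_combination hf2
      · have hyz : y ≤ z := hyle z hz
        have hsum2 := hsum (fun u => Real.exp (-|z - u|))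
        rw [hsum2, H1 z hz, hwx]
        have h1 : |z - x| = (z - y) + d := by
          rw [abs_of_nonneg (by linarith [hxlt z hz])]; ring
        have h2 : |z - y| = z - y := abs_of_nonneg (by linarith)
        rw [h1, h2, neg_add, Real.exp_add]
        linear_combination Real.exp (-(z-y)) * hf2
    · rw [List.toFinset_cons, Finset.sum_insert hxns, hwx]
      have h1 : ∑ u ∈ ys.toFinset, w' u = ∑ u ∈ ys.toFinset, (fun _ => (1:ℝ)) u * w' u := by
        simp
      have h2 : ∑ u ∈ ys.toFinset, (fun _ => (1:ℝ)) u * w u = ∑ u ∈ ys.toFinset, w u := by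
        simp
      rw [h1, hsum, h2, H2]
      show 1 - f + (1 + MagGsum ys - 1 * f) = 1 + MagGsum (x :: ys)
      rw [hys]
      show 1 - f + (1 + MagGsum (y :: t) - 1 * f)
        = 1 + (Real.tanh ((y - x) / 2) + MagGsum (y :: t))
      rw [← hdd, magTanhHalf d, ← hf]
      ring

noncomputable def MagL (ℓ : ℝ) : ℕ → List ℝ
  | 0 => [0, ℓ]
  | k + 1 => (MagL ℓ k).map (fun x => x / 3) ++ (MagL ℓ k).map (fun x => x / 3 + 2 * ℓ / 3)

lemma magGsumAppend : ∀ (l₁ : List ℝ) (l₂ : List ℝ) (a b : ℝ),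
    l₁.getLast? = some a → l₂.head? = some b →
    MagGsum (l₁ ++ l₂) = MagGsum l₁ + Real.tanh ((b - a) / 2) + MagGsum l₂
  | [], _, _, _, h, _ => by simp at h
  | [x], c :: t2, a, b, h, h2 => by
    have ha : x = a := by simpa using h
    have hb : c = b := by simpa using h2
    show MagGsum (x :: c :: t2) = MagGsum [x] + _ + _
    rw [MagGsum, ha, hb]
    have h0 : MagGsum [a] = 0 := rfl
    rw [h0]; ring
  | x :: y :: t, l₂, a, b, h, h2 => by
    have h' : (y :: t).getLast? = some a := by
      rw [← h, List.getLast?_cons_cons]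
    have ih := magGsumAppend (y :: t) l₂ a b h' h2
    show MagGsum (x :: y :: (t ++ l₂)) = MagGsum (x :: y :: t) + _ + _
    rw [MagGsum, MagGsum]
    have he : y :: (t ++ l₂) = (y :: t) ++ l₂ := rfl
    rw [he, ih]
    ring

lemma magGsumTranslate (c : ℝ) : ∀ l : List ℝ,
    MagGsum (l.map (fun x => x + c)) = MagGsum l
  | [] => rfl
  | [x] => rfl
  | x :: y :: t => by
    have ih := magGsumTranslate c (y :: t)
    show MagGsum ((x + c) :: (y + c) :: (t.map _)) = _
    rw [MagGsum, MagGsum]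
    have he : (y + c) :: t.map (fun x => x + c) = (y :: t).map (fun x => x + c) := rfl
    rw [he, ih]
    ring_nf

lemma magLScale (ℓ : ℝ) : ∀ k, (MagL ℓ k).map (fun x => x / 3) = MagL (ℓ / 3) k
  | 0 => by norm_num [MagL]
  | k + 1 => by
    rw [MagL, MagL, List.map_append, List.map_map, List.map_map,
      ← magLScale ℓ k, List.map_map, List.map_map]
    congr 1 <;> (congr 1; funext x; simp; ring)

lemma magLLast (ℓ : ℝ) : ∀ k, (MagL ℓ k).getLast? = some ℓ ∧ (MagL ℓ k).head? = some 0
  | 0 => by constructor <;> rfl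
  | k + 1 => by
    obtain ⟨h1, h2⟩ := magLLast ℓ k
    constructor
    · rw [MagL, List.getLast?_append, List.getLast?_map, h1]
      simp; ring
    · rw [MagL, List.head?_append, List.head?_map, h2]
      simp

lemma magLChain (k : ℕ) : ∀ ℓ : ℝ, 0 < ℓ → (MagL ℓ k).Chain' (· < ·) := by
  induction k with
  | zero => intro ℓ hℓ; exact List.isChain_pair.mpr hℓ
  | succ k ih =>
    intro ℓ hℓ
    rw [MagL]; unfold List.Chain'; rw [List.isChain_append]
    refine ⟨?_, ?_, ?_⟩
    · rw [List.isChain_map]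
      exact List.IsChain.imp (fun a b h => by linarith) (ih ℓ hℓ)
    · rw [List.isChain_map]
      exact List.IsChain.imp (fun a b h => by linarith) (ih ℓ hℓ)
    · intro x hx y hy
      rw [List.getLast?_map, (magLLast ℓ k).1] at hx
      rw [List.head?_map, (magLLast ℓ k).2] at hy
      simp at hx hy
      subst hx; subst hy
      linarith

lemma magGsumRec (ℓ : ℝ) (k : ℕ) :
    MagGsum (MagL ℓ (k + 1)) = 2 * MagGsum (MagL (ℓ / 3) k) + Real.tanh (ℓ / 6) := by
  have hB : (MagL ℓ k).map (fun x => x / 3 + 2 * ℓ / 3)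
      = (MagL (ℓ / 3) k).map (fun x => x + 2 * ℓ / 3) := by
    rw [← magLScale, List.map_map]
    rfl
  rw [MagL, magLScale, hB,
    magGsumAppend _ _ (ℓ / 3) (0 + 2 * ℓ / 3) (magLLast (ℓ/3) k).1
      (by rw [List.head?_map, (magLLast (ℓ/3) k).2]; rfl),
    magGsumTranslate]
  have : (0 + 2 * ℓ / 3 - ℓ / 3) / 2 = ℓ / 6 := by ring
  rw [this]; ring

lemma magIccRange (g : ℕ → ℝ) (k : ℕ) :
    ∑ i ∈ Finset.Icc 1 k, g i = ∑ i ∈ Finset.range k, g (i + 1) := by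
  rw [← Finset.Ico_add_one_right_eq_Icc, Finset.range_eq_Ico, Finset.sum_Ico_add' g 0 k (c := 1)]

lemma magGsumFormula (k : ℕ) : ∀ ℓ : ℝ,
    MagGsum (MagL ℓ k) = 2 ^ k * Real.tanh (ℓ / (2 * 3 ^ k))
      + (1 / 2) * ∑ i ∈ Finset.Icc 1 k, (2:ℝ) ^ i * Real.tanh (ℓ / (2 * 3 ^ i)) := by
  induction k with
  | zero =>
    intro ℓ
    have h0 : MagGsum (MagL ℓ 0) = Real.tanh ((ℓ - 0) / 2) + MagGsum [ℓ] := rfl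
    have h1 : MagGsum [ℓ] = 0 := rfl
    have h2 : (ℓ - 0) / 2 = ℓ / (2 * 3 ^ (0:ℕ)) := by norm_num
    rw [h0, h1, h2]
    simp
  | succ k ih =>
    intro ℓ
    have harg : ∀ i : ℕ, ℓ / 3 / (2 * 3 ^ i) = ℓ / (2 * 3 ^ (i + 1)) := by
      intro i; rw [pow_succ]; ring
    rw [magGsumRec, ih (ℓ / 3),
      magIccRange (fun i => (2:ℝ) ^ i * Real.tanh (ℓ / 3 / (2 * 3 ^ i))),
      magIccRange (fun i => (2:ℝ) ^ i * Real.tanh (ℓ / (2 * 3 ^ i))),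
      Finset.sum_range_succ']
    have hsum : ∑ i ∈ Finset.range k, (2:ℝ) ^ (i + 1) * Real.tanh (ℓ / 3 / (2 * 3 ^ (i + 1)))
        = (1 / 2) * ∑ i ∈ Finset.range k,
            (2:ℝ) ^ (i + 1 + 1) * Real.tanh (ℓ / (2 * 3 ^ (i + 1 + 1))) := by
      rw [Finset.mul_sum]
      refine Finset.sum_congr rfl (fun i _ => ?_)
      rw [harg (i + 1), pow_succ]
      ring
    rw [harg k, hsum]
    have h1 : ℓ / (2 * 3 ^ (0 + 1)) = ℓ / 6 := by norm_num
    rw [h1, pow_succ]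
    ring

lemma magToFinsetMap (f : ℝ → ℝ) (l : List ℝ) :
    (l.map f).toFinset = l.toFinset.image f := by
  induction l with
  | nil => simp
  | cons x t ih => simp [ih]

/-- The magnitude of the `k`-th finite approximation `T_ℓ^k` to the ternary Cantor set of
length `ℓ` (defined by `T_ℓ^0 = {0, ℓ}` and
`T_ℓ^{k+1} = (1/3)·T_ℓ^k ∪ ((1/3)·T_ℓ^k + 2ℓ/3)`, with the metric induced from `ℝ`) is
defined and equals `1 + 2^k tanh(ℓ/(2·3^k)) + ½ Σ_{i=1}^k 2^i tanh(ℓ/(2·3^i))`. -/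
theorem magnitude_cantor_approximation (ℓ : ℝ) (hℓ : 0 < ℓ) (T : ℕ → Finset ℝ)
    (hT0 : T 0 = {0, ℓ})
    (hTsucc : ∀ k, T (k + 1) =
      (T k).image (fun x => x / 3) ∪ (T k).image (fun x => x / 3 + 2 * ℓ / 3))
    (k : ℕ) :
    ∃ w : ℝ → ℝ,
      (∀ x ∈ T k, ∑ x' ∈ T k, Real.exp (-dist x x') * w x' = 1) ∧
      ∑ x ∈ T k, w x = 1 + 2 ^ k * Real.tanh (ℓ / (2 * 3 ^ k))
        + (1 / 2) * ∑ i ∈ Finset.Icc 1 k, (2 : ℝ) ^ i * Real.tanh (ℓ / (2 * 3 ^ i)) := by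
  have hTL : ∀ k, T k = (MagL ℓ k).toFinset := by
    intro k
    induction k with
    | zero => rw [hT0]; simp [MagL]
    | succ k ih =>
      rw [hTsucc, ih, MagL, List.toFinset_append]
      rw [magToFinsetMap, magToFinsetMap]
  have hne : MagL ℓ k ≠ [] := by
    intro h
    have h1 := (magLLast ℓ k).1
    rw [h] at h1
    simp at h1
  obtain ⟨w, Hw1, Hw2⟩ := magLine (MagL ℓ k) (magLChain k ℓ hℓ) hne
  refine ⟨w, ?_, ?_⟩
  · intro x hx
    rw [hTL] at hx ⊢
    simp only [Real.dist_eq]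
    exact Hw1 x (List.mem_toFinset.mp hx)
  · rw [hTL, Hw2, magGsumFormula k ℓ]
    ring
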